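/- Let c > 2, λ₁ = c²(1 − √(1 − 4/c²))/2, and φ̃₁(t) = (1/2)e^{λ₁ t} for t ≤ 0, φ̃₁(t) = 1 − (1/2)e^{−λ₁ t} for t > 0. Then for every t ∈ ℝ \ {0}, φ̃₁'(t) − (1/c²)φ̃₁''(t) ≥ φ̃₁(t)(1 − φ̃₁(t)). -/

import Mathlib

open Real

lemma my_deriv_kexp (k a : ℝ) (x : ℝ) :
    deriv (fun t => k * Real.exp (a * t)) x = k * a * Real.exp (a * x) := by
  have h1 : HasDerivAt (fun t : ℝ => a * t) a x := by
    simpa using (hasDerivAt_id x).const_mul a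
  have h2 := ((Real.hasDerivAt_exp (a * x)).comp x h1).const_mul k
  have h : HasDerivAt (fun t => k * Real.exp (a * t)) (k * a * Real.exp (a * x)) x := by
    exact h2.congr_deriv (by ring)
  exact h.deriv

lemma my_deriv_one_sub_kexp (k a : ℝ) (x : ℝ) :
    deriv (fun t => 1 - k * Real.exp (a * t)) x = -(k * a) * Real.exp (a * x) := by
  have h1 : HasDerivAt (fun t : ℝ => a * t) a x := by
    simpa using (hasDerivAt_id x).const_mul a
  have h2 := ((Real.hasDerivAt_exp (a * x)).comp x h1).const_mul k
  have h : HasDerivAt (fun t => 1 - k * Real.exp (a * t)) (-(k * a) * Real.exp (a * x)) x := by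
    have := (hasDerivAt_const x (1:ℝ)).sub h2
    exact this.congr_deriv (by ring)
  exact h.deriv

theorem upper_profile_inequality (c : ℝ) (hc : 2 < c) :
    let lam1 := c ^ 2 * (1 - Real.sqrt (1 - 4 / c ^ 2)) / 2
    let φ : ℝ → ℝ := fun t =>
      if t ≤ 0 then (1 / 2) * Real.exp (lam1 * t) else 1 - (1 / 2) * Real.exp (-lam1 * t)
    ∀ t : ℝ, t ≠ 0 →
      deriv φ t - (1 / c ^ 2) * deriv (deriv φ) t ≥ φ t * (1 - φ t) := by
  intro lam1 φ t ht
  have hc2 : (0:ℝ) < c ^ 2 := by positivity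
  have hle : (0:ℝ) ≤ 1 - 4 / c ^ 2 := by
    rw [sub_nonneg, div_le_one hc2]
    nlinarith
  set s := Real.sqrt (1 - 4 / c ^ 2) with hsdef
  have hs : s ^ 2 = 1 - 4 / c ^ 2 := Real.sq_sqrt hle
  have h4 : s ^ 2 * c ^ 2 = c ^ 2 - 4 := by
    rw [hs]; field_simp
  have key : lam1 - lam1 ^ 2 / c ^ 2 = 1 := by
    have e1 : lam1 ^ 2 / c ^ 2 = c ^ 2 * (1 - s) ^ 2 / 4 := by
      show (c ^ 2 * (1 - s) / 2) ^ 2 / c ^ 2 = _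
      field_simp; ring
    rw [e1]
    show c ^ 2 * (1 - s) / 2 - c ^ 2 * (1 - s) ^ 2 / 4 = 1
    linear_combination (-1/4 : ℝ) * h4
  rcases lt_or_gt_of_ne ht with htneg | htpos
  · -- t < 0
    set g : ℝ → ℝ := fun x => (1/2) * Real.exp (lam1 * x) with hg
    have heq : φ =ᶠ[nhds t] g := by
      filter_upwards [Iio_mem_nhds htneg] with x hx
      have hx' : x < 0 := hx
      simp [φ, g, hx'.le]
    have hd1 : deriv φ t = (1/2) * lam1 * Real.exp (lam1 * t) := by
      rw [heq.deriv_eq, hg, my_deriv_kexp]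
    have hd2 : deriv (deriv φ) t = (1/2) * lam1 * lam1 * Real.exp (lam1 * t) := by
      rw [heq.deriv.deriv_eq]
      have hdg : deriv g = fun x => (1/2) * lam1 * Real.exp (lam1 * x) := by
        funext x; rw [hg, my_deriv_kexp]
      rw [hdg, my_deriv_kexp]
    have hφ : φ t = (1/2) * Real.exp (lam1 * t) := by simp [φ, htneg.le]
    rw [hd1, hd2, hφ]
    have hE : (0:ℝ) < Real.exp (lam1 * t) := Real.exp_pos _
    have h1 : (1/2) * lam1 * Real.exp (lam1 * t)
        - 1 / c ^ 2 * ((1/2) * lam1 * lam1 * Real.exp (lam1 * t))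
        = (lam1 - lam1 ^ 2 / c ^ 2) * ((1/2) * Real.exp (lam1 * t)) := by
      field_simp
    rw [h1, key]
    nlinarith [hE]
  · -- t > 0
    set g : ℝ → ℝ := fun x => 1 - (1/2) * Real.exp (-lam1 * x) with hg
    have heq : φ =ᶠ[nhds t] g := by
      filter_upwards [Ioi_mem_nhds htpos] with x hx
      have hx' : 0 < x := hx
      simp [φ, g, not_le.mpr hx']
    have hd1 : deriv φ t = lam1 / 2 * Real.exp (-lam1 * t) := by
      rw [heq.deriv_eq, hg, my_deriv_one_sub_kexp]
      ring
    have hd2 : deriv (deriv φ) t = -(lam1 / 2 * lam1) * Real.exp (-lam1 * t) := by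
      rw [heq.deriv.deriv_eq]
      have hdg : deriv g = fun x => lam1 / 2 * Real.exp (-lam1 * x) := by
        funext x; rw [hg, my_deriv_one_sub_kexp]; ring
      rw [hdg, my_deriv_kexp]
      ring
    have hφ : φ t = 1 - (1/2) * Real.exp (-lam1 * t) := by simp [φ, not_le.mpr htpos]
    rw [hd1, hd2, hφ]
    have hE : (0:ℝ) < Real.exp (-lam1 * t) := Real.exp_pos _
    have h1 : lam1 / 2 * Real.exp (-lam1 * t)
        - 1 / c ^ 2 * (-(lam1 / 2 * lam1) * Real.exp (-lam1 * t))
        = (lam1 + lam1 ^ 2 / c ^ 2) * ((1/2) * Real.exp (-lam1 * t)) := by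
      field_simp; ring
    rw [h1]
    have h2 : 1 ≤ lam1 + lam1 ^ 2 / c ^ 2 := by
      nlinarith [key, div_nonneg (sq_nonneg lam1) hc2.le]
    nlinarith [hE, h2]
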